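/- Let ℙ be an atomless probability measure, Y₁ ≤ Y₂ nonnegative random variables with E^ℙ[Y₁] < 1 < E^ℙ[Y₂] < ∞, and 𝓟(ℙ,Y₁,Y₂) = {ℚ ≪ ℙ : Y₁ ≤ dℚ/dℙ ≤ Y₂}. For A ∈ 𝓕: if E^ℙ[Y₂·1_A + Y₁·1_{Aᶜ}] ≤ 1 then sup_{ℚ ∈ 𝓟(ℙ,Y₁,Y₂)} ℚ(A) = E^ℙ[Y₂·1_A]; if E^ℙ[Y₂·1_A + Y₁·1_{Aᶜ}] > 1, then for any measurable B ⊆ A with E^ℙ[Y₂·1_B + Y₁·1_{Bᶜ}] = 1, sup_{ℚ ∈ 𝓟(ℙ,Y₁,Y₂)} ℚ(A) = E^ℙ[Y₂·1_B + Y₁·1_{A∖B}]. -/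

import Mathlib

open Set MeasureTheory
open scoped Classical

lemma stmt13_aux {Ω : Type*} [MeasurableSpace Ω] (ℙ : Measure Ω) [IsProbabilityMeasure ℙ]
    (Z : Ω → ℝ) (hZm : Measurable Z) (hZ0 : ∀ ω, 0 ≤ Z ω) (hZint : Integrable Z ℙ)
    (hZ1 : ∫ ω, Z ω ∂ℙ = 1) :
    IsProbabilityMeasure (ℙ.withDensity fun ω => ENNReal.ofReal (Z ω)) ∧
    (ℙ.withDensity fun ω => ENNReal.ofReal (Z ω)) ≪ ℙ ∧
    (∀ᵐ ω ∂ℙ, (((ℙ.withDensity fun ω => ENNReal.ofReal (Z ω)).rnDeriv ℙ) ω).toReal = Z ω) ∧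
    ∀ s : Set Ω, MeasurableSet s →
      ((ℙ.withDensity fun ω => ENNReal.ofReal (Z ω)) s).toReal = ∫ ω in s, Z ω ∂ℙ := by
  have hfm : Measurable fun ω => ENNReal.ofReal (Z ω) := hZm.ennreal_ofReal
  have happ : ∀ s : Set Ω, MeasurableSet s →
      ((ℙ.withDensity fun ω => ENNReal.ofReal (Z ω)) s).toReal = ∫ ω in s, Z ω ∂ℙ := by
    intro s hs
    rw [withDensity_apply _ hs,
      ← ofReal_integral_eq_lintegral_ofReal hZint.restrict
        (Filter.Eventually.of_forall hZ0),
      ENNReal.toReal_ofReal (setIntegral_nonneg hs fun ω _ => hZ0 ω)]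
  refine ⟨⟨?_⟩, withDensity_absolutelyContinuous _ _, ?_, happ⟩
  · rw [withDensity_apply _ MeasurableSet.univ,
      ← ofReal_integral_eq_lintegral_ofReal hZint.restrict
        (Filter.Eventually.of_forall hZ0)]
    simp [Measure.restrict_univ, hZ1]
  · filter_upwards [Measure.rnDeriv_withDensity ℙ hfm] with ω hω
    rw [hω, ENNReal.toReal_ofReal (hZ0 ω)]

/-- Worst-case probability of an event under likelihood-ratio constraints
`Y₁ ≤ dQ/dℙ ≤ Y₂`: if `E[Y₂ 1_A + Y₁ 1_{Aᶜ}] ≤ 1` it equals `E[Y₂ 1_A]`; otherwise,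
for any measurable `B ⊆ A` with `E[Y₂ 1_B + Y₁ 1_{Bᶜ}] = 1`, it equals
`E[Y₂ 1_B + Y₁ 1_{A∖B}]`. -/
theorem stmt_13 {Ω : Type*} [MeasurableSpace Ω] (ℙ : Measure Ω)
    [IsProbabilityMeasure ℙ] [NullSingletonClass ℙ]
    (Y₁ Y₂ : Ω → ℝ) (hY₁meas : Measurable Y₁) (hY₂meas : Measurable Y₂)
    (hY₁pos : ∀ ω, 0 ≤ Y₁ ω) (hle : ∀ ω, Y₁ ω ≤ Y₂ ω)
    (hY₁int : Integrable Y₁ ℙ) (hY₂int : Integrable Y₂ ℙ)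
    (hEY₁ : ∫ ω, Y₁ ω ∂ℙ < 1) (hEY₂ : 1 < ∫ ω, Y₂ ω ∂ℙ)
    (A : Set Ω) (hA : MeasurableSet A) :
    let Pset : Set (Measure Ω) := {Q | IsProbabilityMeasure Q ∧ Q ≪ ℙ ∧
      ∀ᵐ ω ∂ℙ, Y₁ ω ≤ (Q.rnDeriv ℙ ω).toReal ∧ (Q.rnDeriv ℙ ω).toReal ≤ Y₂ ω}
    ((∫ ω in A, Y₂ ω ∂ℙ + ∫ ω in Aᶜ, Y₁ ω ∂ℙ ≤ 1) →
      (⨆ Q ∈ Pset, (Q A).toReal) = ∫ ω in A, Y₂ ω ∂ℙ) ∧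
    ((1 < ∫ ω in A, Y₂ ω ∂ℙ + ∫ ω in Aᶜ, Y₁ ω ∂ℙ) →
      ∀ B : Set Ω, MeasurableSet B → B ⊆ A →
        (∫ ω in B, Y₂ ω ∂ℙ + ∫ ω in Bᶜ, Y₁ ω ∂ℙ = 1) →
        (⨆ Q ∈ Pset, (Q A).toReal) = ∫ ω in B, Y₂ ω ∂ℙ + ∫ ω in A \ B, Y₁ ω ∂ℙ) := by
  intro Pset
  -- boundedness of the family of values
  have bdd : BddAbove (Set.range fun Q : Measure Ω => ⨆ (_ : Q ∈ Pset), (Q A).toReal) := by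
    refine ⟨1, ?_⟩
    rintro x ⟨Q, rfl⟩
    refine Real.iSup_le (fun h => ?_) zero_le_one
    haveI := h.1
    have h1 : (Q A).toReal ≤ (1 : ENNReal).toReal :=
      ENNReal.toReal_mono ENNReal.one_ne_top prob_le_one
    simpa using h1
  -- general fact for computing the sup
  have sup_eq : ∀ r : ℝ, (∀ Q ∈ Pset, (Q A).toReal ≤ r) →
      ∀ Q₀ ∈ Pset, (Q₀ A).toReal = r → (⨆ Q ∈ Pset, (Q A).toReal) = r := by
    intro r hub Q₀ hQ₀ hval
    have hr0 : 0 ≤ r := hval ▸ ENNReal.toReal_nonneg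
    refine le_antisymm (Real.iSup_le (fun Q => Real.iSup_le (fun h => hub Q h) hr0) hr0) ?_
    calc r = ⨆ (_ : Q₀ ∈ Pset), (Q₀ A).toReal := by rw [ciSup_pos hQ₀, hval]
      _ ≤ _ := le_ciSup bdd Q₀
  -- membership + value computation for densities Z with Y₁ ≤ Z ≤ Y₂, ∫ Z = 1
  have key : ∀ Z : Ω → ℝ, Measurable Z → (∀ ω, Y₁ ω ≤ Z ω) → (∀ ω, Z ω ≤ Y₂ ω) →
      (∫ ω, Z ω ∂ℙ = 1) →
      (ℙ.withDensity fun ω => ENNReal.ofReal (Z ω)) ∈ Pset ∧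
      ∀ s : Set Ω, MeasurableSet s →
        ((ℙ.withDensity fun ω => ENNReal.ofReal (Z ω)) s).toReal = ∫ ω in s, Z ω ∂ℙ := by
    intro Z hZm hZ1 hZ2 hZint1
    have hZ0 : ∀ ω, 0 ≤ Z ω := fun ω => (hY₁pos ω).trans (hZ1 ω)
    have hZint : Integrable Z ℙ := by
      refine hY₂int.mono' hZm.aestronglyMeasurable ?_
      filter_upwards with ω
      rw [Real.norm_eq_abs, abs_of_nonneg (hZ0 ω)]
      exact hZ2 ω
    obtain ⟨h1, h2, h3, h4⟩ := stmt13_aux ℙ Z hZm hZ0 hZint hZint1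
    refine ⟨⟨h1, h2, ?_⟩, h4⟩
    filter_upwards [h3] with ω hω
    rw [hω]
    exact ⟨hZ1 ω, hZ2 ω⟩
  -- upper bound via rnDeriv ≤ Y₂ on a set, and ≥ Y₁ on a set
  have hrd : ∀ Q ∈ Pset, ∀ s : Set Ω, MeasurableSet s →
      ∫ ω in s, Y₁ ω ∂ℙ ≤ (Q s).toReal ∧ (Q s).toReal ≤ ∫ ω in s, Y₂ ω ∂ℙ := by
    rintro Q ⟨hQprob, hQac, hQbound⟩ s hs
    haveI := hQprob
    have heq : (Q s).toReal = ∫ ω in s, (Q.rnDeriv ℙ ω).toReal ∂ℙ :=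
      (Measure.setIntegral_toReal_rnDeriv hQac s).symm
    have hint : IntegrableOn (fun ω => (Q.rnDeriv ℙ ω).toReal) s ℙ :=
      (Measure.integrable_toReal_rnDeriv).restrict
    constructor
    · rw [heq]
      exact integral_mono_ae hY₁int.restrict hint
        (ae_restrict_of_ae (hQbound.mono fun ω h => h.1))
    · rw [heq]
      exact integral_mono_ae hint hY₂int.restrict
        (ae_restrict_of_ae (hQbound.mono fun ω h => h.2))
  constructor
  · -- Case 1
    intro hle1
    set a := ∫ ω in A, Y₂ ω ∂ℙ with ha
    set b₁ := ∫ ω in Aᶜ, Y₁ ω ∂ℙ with hb₁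
    set b₂ := ∫ ω in Aᶜ, Y₂ ω ∂ℙ with hb₂
    have hab₂ : 1 < a + b₂ := by
      rw [ha, hb₂, integral_add_compl hA hY₂int]; exact hEY₂
    have hden : 0 < b₂ - b₁ := by linarith
    set t := (1 - (a + b₁)) / (b₂ - b₁) with ht
    have ht0 : 0 ≤ t := div_nonneg (by linarith) hden.le
    have ht1 : t ≤ 1 := by
      rw [ht, div_le_one hden]; linarith
    set Z : Ω → ℝ := fun ω => if ω ∈ A then Y₂ ω else t * Y₂ ω + (1 - t) * Y₁ ω with hZ
    have hZm : Measurable Z :=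
      Measurable.ite hA hY₂meas ((measurable_const.mul hY₂meas).add
        (measurable_const.mul hY₁meas))
    have hZlb : ∀ ω, Y₁ ω ≤ Z ω := by
      intro ω; rw [hZ]; dsimp only
      split
      · exact hle ω
      · nlinarith [hle ω]
    have hZub : ∀ ω, Z ω ≤ Y₂ ω := by
      intro ω; rw [hZ]; dsimp only
      split
      · exact le_refl _
      · nlinarith [hle ω]
    have hZA : ∫ ω in A, Z ω ∂ℙ = a := by
      rw [ha]
      exact setIntegral_congr_fun hA (fun ω hω => by simp [hZ, hω])
    have hZAc : ∫ ω in Aᶜ, Z ω ∂ℙ = t * b₂ + (1 - t) * b₁ := by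
      have : ∫ ω in Aᶜ, Z ω ∂ℙ = ∫ ω in Aᶜ, (t * Y₂ ω + (1 - t) * Y₁ ω) ∂ℙ :=
        setIntegral_congr_fun hA.compl (fun ω hω => by
          simp only [hZ]; rw [if_neg hω])
      rw [this, integral_add ((hY₂int.restrict).const_mul t)
        ((hY₁int.restrict).const_mul (1 - t)), integral_const_mul, integral_const_mul,
        hb₂, hb₁]
    have hZint1 : ∫ ω, Z ω ∂ℙ = 1 := by
      rw [← integral_add_compl hA (by
        refine hY₂int.mono' hZm.aestronglyMeasurable ?_
        filter_upwards with ω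
        rw [Real.norm_eq_abs, abs_of_nonneg ((hY₁pos ω).trans (hZlb ω))]
        exact hZub ω), hZA, hZAc]
      have hne : b₂ - b₁ ≠ 0 := ne_of_gt hden
      field_simp [ht]
      have h' : t * (b₂ - b₁) = 1 - (a + b₁) := by rw [ht]; exact div_mul_cancel₀ _ hne
      linear_combination h'
    obtain ⟨hmem, hval⟩ := key Z hZm hZlb hZub hZint1
    refine sup_eq a (fun Q hQ => (hrd Q hQ A hA).2) _ hmem ?_
    rw [hval A hA, hZA]
  · -- Case 2
    intro _ B hB hBA hBsum
    set Z : Ω → ℝ := fun ω => if ω ∈ B then Y₂ ω else Y₁ ω with hZ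
    have hZm : Measurable Z := Measurable.ite hB hY₂meas hY₁meas
    have hZlb : ∀ ω, Y₁ ω ≤ Z ω := by
      intro ω; rw [hZ]; dsimp only; split
      · exact hle ω
      · exact le_refl _
    have hZub : ∀ ω, Z ω ≤ Y₂ ω := by
      intro ω; rw [hZ]; dsimp only; split
      · exact le_refl _
      · exact hle ω
    have hZB : ∫ ω in B, Z ω ∂ℙ = ∫ ω in B, Y₂ ω ∂ℙ :=
      setIntegral_congr_fun hB (fun ω hω => by simp [hZ, hω])
    have hZBc : ∫ ω in Bᶜ, Z ω ∂ℙ = ∫ ω in Bᶜ, Y₁ ω ∂ℙ :=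
      setIntegral_congr_fun hB.compl (fun ω hω => by
        simp only [hZ]; rw [if_neg hω])
    have hZint : Integrable Z ℙ := by
      refine hY₂int.mono' hZm.aestronglyMeasurable ?_
      filter_upwards with ω
      rw [Real.norm_eq_abs, abs_of_nonneg ((hY₁pos ω).trans (hZlb ω))]
      exact hZub ω
    have hZint1 : ∫ ω, Z ω ∂ℙ = 1 := by
      rw [← integral_add_compl hB hZint, hZB, hZBc, hBsum]
    obtain ⟨hmem, hval⟩ := key Z hZm hZlb hZub hZint1
    -- splitting of Bᶜ
    have hsplit : Bᶜ = (A \ B) ∪ Aᶜ := by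
      ext ω
      simp only [mem_compl_iff, mem_union, mem_diff]
      constructor
      · intro h
        by_cases hω : ω ∈ A
        · exact Or.inl ⟨hω, h⟩
        · exact Or.inr hω
      · rintro (⟨_, h⟩ | h)
        · exact h
        · exact fun hb => h (hBA hb)
    have hY₁split : ∫ ω in Bᶜ, Y₁ ω ∂ℙ
        = ∫ ω in A \ B, Y₁ ω ∂ℙ + ∫ ω in Aᶜ, Y₁ ω ∂ℙ := by
      rw [hsplit]
      exact setIntegral_union (disjoint_left.mpr fun _ hω hc => hc hω.1)
        hA.compl hY₁int.restrict hY₁int.restrict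
    refine sup_eq _ ?_ _ hmem ?_
    · -- upper bound
      rintro Q hQ
      have hQc := (hrd Q hQ Aᶜ hA.compl).1
      haveI := hQ.1
      have hcompl : (Q Aᶜ).toReal = 1 - (Q A).toReal := by
        rw [prob_compl_eq_one_sub hA,
          ENNReal.toReal_sub_of_le prob_le_one ENNReal.one_ne_top]
        simp
      linarith
    · -- value
      have hAsplit : ∫ ω in A, Z ω ∂ℙ
          = ∫ ω in B, Z ω ∂ℙ + ∫ ω in A \ B, Z ω ∂ℙ := by
        rw [← setIntegral_union (disjoint_left.mpr fun ω hω h => h.2 hω)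
          (hA.diff hB) hZint.restrict hZint.restrict, union_diff_cancel hBA]
      have hZAB : ∫ ω in A \ B, Z ω ∂ℙ = ∫ ω in A \ B, Y₁ ω ∂ℙ :=
        setIntegral_congr_fun (hA.diff hB) (fun ω hω => by
          simp only [hZ]; rw [if_neg hω.2])
      rw [hval A hA, hAsplit, hZB, hZAB]
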